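/- Suppose F: ℝ^n → ℝ^n is Newton differentiable on {x̄} with Newton derivative DF, F(x̄) = 0, and there are ε, M, K > 0 such that for all x ∈ B_ε(x̄) the matrix DF(x) is invertible with ‖DF(x)^{-1}‖ ≤ M and ‖DF(x)‖ ≤ K. Then there exist constants c, C, δ > 0 such that c‖F(x)‖ ≤ ‖x − x̄‖ ≤ C‖F(x)‖ for all x ∈ B_δ(x̄). -/

import Mathlib

open Asymptotics Filter

theorem stmt_6 (n : ℕ) (F : (Fin n → ℝ) → Fin n → ℝ)
    (DF : (Fin n → ℝ) → ((Fin n → ℝ) →L[ℝ] (Fin n → ℝ)))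
    (xb : Fin n → ℝ)
    (hNewton :
      (fun h => F (xb + h) - F xb - DF (xb + h) h) =o[nhds (0 : Fin n → ℝ)] (fun h => h))
    (hFxb : F xb = 0) (ε M K : ℝ) (hε : 0 < ε) (hM : 0 < M) (hK : 0 < K)
    (hinv : ∀ x ∈ Metric.closedBall xb ε,
      (∃ B : (Fin n → ℝ) →L[ℝ] (Fin n → ℝ),
        (DF x).comp B = ContinuousLinearMap.id ℝ (Fin n → ℝ) ∧
        B.comp (DF x) = ContinuousLinearMap.id ℝ (Fin n → ℝ) ∧ ‖B‖ ≤ M) ∧ ‖DF x‖ ≤ K) :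
    ∃ c > (0 : ℝ), ∃ C > (0 : ℝ), ∃ δ > (0 : ℝ), ∀ x ∈ Metric.closedBall xb δ,
      c * ‖F x‖ ≤ ‖x - xb‖ ∧ ‖x - xb‖ ≤ C * ‖F x‖ := by
  have hε' : (0:ℝ) < 1 / (2 * M) := by positivity
  have hev := hNewton.def hε'
  rw [Metric.eventually_nhds_iff] at hev
  obtain ⟨δ', hδ', hbd⟩ := hev
  refine ⟨1 / (K + 1 / (2 * M)), by positivity, 2 * M, by positivity,
    min (δ' / 2) ε, by positivity, ?_⟩
  intro x hx
  rw [Metric.mem_closedBall] at hx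
  have hxn : ‖x - xb‖ ≤ min (δ' / 2) ε := by rwa [← dist_eq_norm]
  have hxε : x ∈ Metric.closedBall xb ε := by
    rw [Metric.mem_closedBall]; exact hx.trans (min_le_right _ _)
  obtain ⟨⟨B, hBl, hBr, hBnorm⟩, hDFnorm⟩ := hinv x hxε
  have hh : dist (x - xb) 0 < δ' := by
    rw [dist_zero_right]
    exact lt_of_le_of_lt (hxn.trans (min_le_left _ _)) (by linarith)
  have hr := hbd hh
  simp only [hFxb, sub_zero] at hr
  have hxx : xb + (x - xb) = x := by abel
  rw [hxx] at hr
  -- hr : ‖F x - DF x (x - xb)‖ ≤ 1/(2M) * ‖x - xb‖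
  set h := x - xb with hdef
  set r := F x - DF x h with rdef
  have hFx : F x = DF x h + r := by rw [rdef]; abel
  have hDFh : ‖DF x h‖ ≤ K * ‖h‖ :=
    le_trans ((DF x).le_opNorm h) (by
      have := norm_nonneg h; nlinarith)
  -- upper bound on ‖F x‖
  have hFub : ‖F x‖ ≤ (K + 1 / (2 * M)) * ‖h‖ := by
    calc ‖F x‖ ≤ ‖DF x h‖ + ‖r‖ := by rw [hFx]; exact norm_add_le _ _
    _ ≤ K * ‖h‖ + 1 / (2 * M) * ‖h‖ := add_le_add hDFh hr
    _ = (K + 1 / (2 * M)) * ‖h‖ := by ring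
  -- lower bound: ‖h‖ ≤ 2M ‖F x‖
  have hBh : h = B (DF x h) := by
    have := congrArg (fun T : (Fin n → ℝ) →L[ℝ] (Fin n → ℝ) => T h) hBr
    simpa using this.symm
  have hBnn : (0:ℝ) ≤ ‖DF x h‖ := norm_nonneg _
  have hhB : ‖h‖ ≤ M * ‖DF x h‖ := by
    calc ‖h‖ = ‖B (DF x h)‖ := by rw [← hBh]
    _ ≤ ‖B‖ * ‖DF x h‖ := B.le_opNorm _
    _ ≤ M * ‖DF x h‖ := by nlinarith
  have hDFF : ‖DF x h‖ ≤ ‖F x‖ + ‖r‖ := by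
    have : DF x h = F x - r := by rw [rdef]; abel
    rw [this]; exact norm_sub_le _ _
  have hlb : ‖h‖ ≤ 2 * M * ‖F x‖ := by
    have h1 : ‖h‖ ≤ M * (‖F x‖ + 1 / (2 * M) * ‖h‖) := by
      refine hhB.trans ?_
      have := hDFF.trans (add_le_add_right hr _)
      nlinarith
    have hM' : M * (1 / (2 * M)) = 1 / 2 := by field_simp
    nlinarith
  constructor
  · rw [div_mul_eq_mul_div, div_le_iff₀ (by positivity)]
    nlinarith [norm_nonneg (F x)]
  · exact hlb
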